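/- arXiv:2112.14164 — 2 statements merged into one kernel-verified Lean document; each statement's English description precedes it below -/
import Mathlib

section
/- For any complex number s with Re(s) > 1 and any τ in the upper half-plane, ∑_{n∈ℤ} (τ+n)^{-s} = (e^{-πis/2}(2π)^s / Γ(s)) ∑_{n≥1} n^{s-1} e^{2πinτ} (Lipschitz's formula, with the principal branch of the power). -/
open Complex Filter Real

open Set MeasureTheory Asymptotics Metric
open scoped FourierTransform Topology

set_option maxHeartbeats 1000000

namespace LipAux

/-- Real integrability of `t^(σ-1) e^{-rt}` on `(0,∞)`. -/
lemma realGamma_integrable {σ r : ℝ} (hσ : 0 < σ) (hr : 0 < r) :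
    IntegrableOn (fun t : ℝ => t ^ (σ - 1) * Real.exp (-(r * t))) (Ioi 0) := by
  have h := Real.GammaIntegral_convergent hσ
  have h2 : IntegrableOn (fun x : ℝ => Real.exp (-(r * x)) * (r * x) ^ (σ - 1)) (Ioi 0) := by
    have := (integrableOn_Ioi_comp_mul_left_iff
      (fun x : ℝ => Real.exp (-x) * x ^ (σ - 1)) 0 hr).mpr (by simpa using h)
    simpa using this
  refine IntegrableOn.congr_fun (h2.const_mul (r ^ (1 - σ))) (fun t ht => ?_) measurableSet_Ioi
  have ht : 0 < t := ht
  rw [Real.mul_rpow hr.le ht.le]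
  rw [show r ^ (1 - σ) * (Real.exp (-(r * t)) * (r ^ (σ - 1) * t ^ (σ - 1)))
      = (r ^ (1 - σ) * r ^ (σ - 1)) * (t ^ (σ - 1) * Real.exp (-(r * t))) by ring,
    ← Real.rpow_add hr]
  norm_num

lemma aux_meas (s c : ℂ) :
    AEStronglyMeasurable (fun t : ℝ => (t : ℂ) ^ (s - 1) * Complex.exp (-(c * t)))
      (volume.restrict (Ioi 0)) := by
  refine ContinuousOn.aestronglyMeasurable ?_ measurableSet_Ioi
  refine ContinuousOn.mul ?_ ?_
  · apply continuousOn_of_forall_continuousAt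
    intro x hx
    exact (continuousAt_cpow_const <| ofReal_mem_slitPlane.2 hx).comp
      continuous_ofReal.continuousAt
  · exact (Complex.continuous_exp.comp (by fun_prop)).continuousOn

lemma aux_norm {s c : ℂ} {t : ℝ} (ht : 0 < t) :
    ‖(t : ℂ) ^ (s - 1) * Complex.exp (-(c * t))‖
      = t ^ (s.re - 1) * Real.exp (-(c.re * t)) := by
  rw [norm_mul, Complex.norm_exp,
    Complex.norm_cpow_eq_rpow_re_of_pos ht]
  simp [Complex.mul_re]

/-- Integrability of `t^(s-1) e^{-ct}` on `(0,∞)` for complex `c` with positive real part. -/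
lemma cpowExp_integrable {s : ℂ} (hs : 0 < s.re) {c : ℂ} (hc : 0 < c.re) :
    IntegrableOn (fun t : ℝ => (t : ℂ) ^ (s - 1) * Complex.exp (-(c * t))) (Ioi 0) := by
  refine Integrable.mono' (realGamma_integrable hs hc) (aux_meas s c) ?_
  rw [ae_restrict_iff' measurableSet_Ioi]
  filter_upwards with t ht
  rw [aux_norm ht]


/-- The Gamma integral with complex rate `c`, `Re c > 0`. -/
lemma integral_cpow_mul_exp_neg_mul_Ioi_cpx {s : ℂ} (hs : 0 < s.re) {c : ℂ} (hc : 0 < c.re) :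
    ∫ t : ℝ in Ioi 0, (t : ℂ) ^ (s - 1) * Complex.exp (-(c * t))
      = c ^ (-s) * Complex.Gamma s := by
  set F : ℂ → ℂ := fun c => ∫ t : ℝ in Ioi 0, (t : ℂ) ^ (s - 1) * Complex.exp (-(c * t)) with hF
  set G : ℂ → ℂ := fun c => c ^ (-s) * Complex.Gamma s with hG
  set Ω : Set ℂ := {z : ℂ | 0 < z.re} with hΩdef
  have hΩ : IsOpen Ω := isOpen_lt continuous_const Complex.continuous_re
  have hFdiff : DifferentiableOn ℂ F Ω := by
    intro c₀ hc₀
    have hc₀re : 0 < c₀.re := hc₀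
    set ε : ℝ := c₀.re / 2 with hε
    have hεpos : 0 < ε := by positivity
    have hmeas : ∀ᶠ c in 𝓝 c₀, AEStronglyMeasurable
        (fun t : ℝ => (t : ℂ) ^ (s - 1) * Complex.exp (-(c * t)))
        (volume.restrict (Ioi 0)) := Eventually.of_forall fun c => aux_meas s c
    have hint : Integrable (fun t : ℝ => (t : ℂ) ^ (s - 1) * Complex.exp (-(c₀ * t)))
        (volume.restrict (Ioi 0)) := cpowExp_integrable hs hc₀re
    have hmeas' : AEStronglyMeasurable
        (fun t : ℝ => (t : ℂ) ^ (s - 1) * (Complex.exp (-(c₀ * t)) * (-(t : ℂ))))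
        (volume.restrict (Ioi 0)) := by
      have := (aux_meas s c₀).mul (Complex.continuous_ofReal.neg.aestronglyMeasurable)
      exact this.congr (Eventually.of_forall fun t => by simp only [Pi.mul_apply, Pi.neg_apply]; ring)
    have hbound : ∀ᵐ t : ℝ ∂(volume.restrict (Ioi 0)), ∀ x ∈ ball c₀ ε,
        ‖(t : ℂ) ^ (s - 1) * (Complex.exp (-(x * t)) * (-(t : ℂ)))‖
          ≤ t ^ ((s.re + 1) - 1) * Real.exp (-(ε * t)) := by
      rw [ae_restrict_iff' measurableSet_Ioi]
      filter_upwards with t ht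
      intro x hx
      have hxre : ε ≤ x.re := by
        have h1 : |x.re - c₀.re| ≤ dist x c₀ := by
          simpa [Complex.dist_eq] using Complex.abs_re_le_norm (x - c₀)
        have h2 : dist x c₀ < ε := mem_ball.mp hx
        have h3 := abs_sub_lt_iff.mp (lt_of_le_of_lt h1 h2)
        have := h3.2
        simp only [hε] at this ⊢
        linarith
      have ht' : (0:ℝ) < t := ht
      rw [show ((t : ℂ) ^ (s - 1) * (Complex.exp (-(x * t)) * (-(t : ℂ))))
        = (t : ℂ) ^ (s - 1) * Complex.exp (-(x * t)) * (-(t : ℂ)) by ring]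
      rw [norm_mul, aux_norm ht']
      have hnt : ‖-(t : ℂ)‖ = t := by
        simp [abs_of_pos ht']
      rw [hnt]
      have h3 : Real.exp (-(x.re * t)) ≤ Real.exp (-(ε * t)) := by
        apply Real.exp_le_exp.mpr
        have := mul_le_mul_of_nonneg_right hxre ht'.le
        linarith
      calc t ^ (s.re - 1) * Real.exp (-(x.re * t)) * t
          ≤ t ^ (s.re - 1) * Real.exp (-(ε * t)) * t := by
            apply mul_le_mul_of_nonneg_right _ ht'.le
            exact mul_le_mul_of_nonneg_left h3 (Real.rpow_nonneg ht'.le _)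
        _ = t ^ (s.re + 1 - 1) * Real.exp (-(ε * t)) := by
            rw [show s.re + 1 - 1 = (s.re - 1) + 1 by ring, Real.rpow_add ht',
              Real.rpow_one]
            ring
    have hbint : Integrable (fun t : ℝ => t ^ ((s.re + 1) - 1) * Real.exp (-(ε * t)))
        (volume.restrict (Ioi 0)) := realGamma_integrable (by linarith) hεpos
    have hdiff : ∀ᵐ t : ℝ ∂(volume.restrict (Ioi 0)), ∀ x ∈ ball c₀ ε,
        HasDerivAt (fun y : ℂ => (t : ℂ) ^ (s - 1) * Complex.exp (-(y * t)))
          ((t : ℂ) ^ (s - 1) * (Complex.exp (-(x * t)) * (-(t : ℂ)))) x := by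
      filter_upwards with t
      intro x hx
      have h1 : HasDerivAt (fun y : ℂ => -(y * (t:ℂ))) (-(t : ℂ)) x := by
        have h := (((hasDerivAt_id' x).mul_const (t : ℂ)).neg :
          HasDerivAt (fun y : ℂ => -(y * (t:ℂ))) (-(1 * (t:ℂ))) x)
        rwa [one_mul] at h
      exact (h1.cexp).const_mul _
    have key := hasDerivAt_integral_of_dominated_loc_of_deriv_le (ball_mem_nhds c₀ hεpos) hmeas hint hmeas'
      hbound hbint hdiff
    exact key.2.differentiableAt.differentiableWithinAt
  have hGdiff : DifferentiableOn ℂ G Ω := by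
    intro c₀ hc₀
    apply DifferentiableAt.differentiableWithinAt
    apply DifferentiableAt.mul_const
    exact (differentiableAt_id.cpow (differentiableAt_const _)
      (Complex.mem_slitPlane_iff.mpr (Or.inl hc₀)))
  have hkey : ∀ r : ℝ, 0 < r → F r = G r := by
    intro r hr
    have h := Complex.integral_cpow_mul_exp_neg_mul_Ioi hs hr
    simp only [hF, hG]
    rw [h, one_div, inv_cpow _ _ (by rw [arg_ofReal_of_nonneg hr.le]; exact Real.pi_pos.ne),
      ← cpow_neg]
  have hEq : EqOn F G Ω := by
    have h1 : AnalyticOnNhd ℂ F Ω := hFdiff.analyticOnNhd hΩ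
    have h2 : AnalyticOnNhd ℂ G Ω := hGdiff.analyticOnNhd hΩ
    refine h1.eqOn_of_preconnected_of_frequently_eq h2
      ((convex_halfSpace_re_gt 0).isPreconnected) (show (1 : ℂ) ∈ Ω by simp [hΩdef]) ?_
    have hseq : Tendsto (fun n : ℕ => ((1 + ((n : ℝ) + 1)⁻¹ : ℝ) : ℂ)) atTop (𝓝[≠] 1) := by
      apply tendsto_nhdsWithin_of_tendsto_nhds_of_eventually_within
      · have : Tendsto (fun n : ℕ => (1 + ((n : ℝ) + 1)⁻¹ : ℝ)) atTop (𝓝 1) := by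
          simpa using tendsto_const_nhds.add ((tendsto_one_div_add_atTop_nhds_zero_nat (𝕜 := ℝ)).congr
            (fun n => by rw [one_div]))
        have := (Complex.continuous_ofReal.tendsto 1).comp this
        simpa [Function.comp_def] using this
      · filter_upwards with n
        simp only [Set.mem_compl_iff, Set.mem_singleton_iff]
        intro h
        have : (1 + ((n : ℝ) + 1)⁻¹ : ℝ) = 1 := by exact_mod_cast h
        have h2 : ((n : ℝ) + 1)⁻¹ > 0 := by positivity
        linarith
    apply hseq.frequently
    apply Frequently.of_forall
    intro n
    exact hkey _ (by positivity)
  have : (c : ℂ) ∈ Ω := hc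
  exact hEq this


variable (s τ : ℂ)

/-- The function whose Fourier transform produces `(τ+x)^(-s)`. -/
noncomputable def gfun : ℝ → ℂ :=
  (Ioi (0:ℝ)).indicator fun t => (t : ℂ) ^ (s - 1) * Complex.exp (-(-(2 * π * I * τ) * t))

variable {s τ}

lemma hre {x : ℝ} (hτ : 0 < τ.im) : 0 < (2 * ↑π * I * ((x:ℂ) - τ)).re := by
  have : (2 * ↑π * I * ((x:ℂ) - τ)).re = 2 * π * τ.im := by
    simp [Complex.mul_re, Complex.mul_im]
  rw [this]
  positivity

lemma hre' (hτ : 0 < τ.im) : 0 < (-(2 * ↑π * I * τ)).re := by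
  have : (-(2 * ↑π * I * τ)).re = 2 * π * τ.im := by
    simp [Complex.mul_re, Complex.mul_im]
  rw [this]; positivity

lemma gfun_integrable (hs : 1 < s.re) (hτ : 0 < τ.im) : Integrable (gfun s τ) := by
  rw [gfun, integrable_indicator_iff measurableSet_Ioi]
  exact cpowExp_integrable (by linarith) (hre' hτ)

/-- The Fourier transform of `gfun`. -/
lemma gfun_fourier (hs : 1 < s.re) (hτ : 0 < τ.im) (x : ℝ) :
    𝓕 (gfun s τ) x = (2 * ↑π * I * ((x:ℂ) - τ)) ^ (-s) * Complex.Gamma s := by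
  rw [Real.fourier_real_eq_integral_exp_smul]
  have h1 : ∀ v : ℝ, Complex.exp (↑(-2 * π * v * x) * I) • gfun s τ v
      = (Ioi (0:ℝ)).indicator
        (fun t => (t : ℂ) ^ (s - 1) * Complex.exp (-((2 * ↑π * I * ((x:ℂ) - τ)) * t))) v := by
    intro v
    rw [gfun, smul_eq_mul]
    by_cases hv : v ∈ Ioi (0:ℝ)
    · rw [Set.indicator_of_mem hv, Set.indicator_of_mem hv, ← mul_assoc,
        mul_comm (Complex.exp _) ((v:ℂ) ^ (s-1)), mul_assoc, ← Complex.exp_add]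
      congr 2
      push_cast
      ring
    · rw [Set.indicator_of_notMem hv, Set.indicator_of_notMem hv, mul_zero]
  simp_rw [h1]
  rw [MeasureTheory.integral_indicator measurableSet_Ioi]
  exact integral_cpow_mul_exp_neg_mul_Ioi_cpx (by linarith) (hre hτ)

/-- Branch manipulation: for `Im z > 0`,
`(2πI(-z))^(-s) = (2π)^(-s) e^{πIs/2} z^(-s)`. -/
lemma branch {z : ℂ} (hz : 0 < z.im) (s : ℂ) :
    (2 * ↑π * I * (-z)) ^ (-s)
      = (2 * ↑π : ℂ) ^ (-s) * Complex.exp (↑π * I * s / 2) * z ^ (-s) := by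
  have hz0 : z ≠ 0 := by
    intro h; rw [h] at hz; simp at hz
  have hu0 : (-I) * z ≠ 0 := by
    simp [hz0, Complex.I_ne_zero]
  have h2π : (0:ℝ) < 2 * π := by positivity
  have hmain : (2 * ↑π * I * (-z)) = ((2 * π : ℝ) : ℂ) * ((-I) * z) := by
    push_cast; ring
  have hlogu : Complex.log ((-I) * z) = Complex.log (-I) + Complex.log z := by
    apply Complex.log_mul (by simp [Complex.I_ne_zero]) hz0
    rw [Complex.arg_neg_I]
    constructor
    · have h1 : 0 ≤ z.arg := Complex.arg_nonneg_iff.mpr hz.le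
      have h2 : 0 < π := Real.pi_pos
      linarith
    · have h1 : z.arg ≤ π := Complex.arg_le_pi z
      have h2 : 0 < π := Real.pi_pos
      linarith
  have hlog : Complex.log (2 * ↑π * I * (-z))
      = ↑(Real.log (2 * π)) + (-(↑π / 2) * I) + Complex.log z := by
    rw [hmain, Complex.log_ofReal_mul h2π hu0, hlogu, Complex.log_neg_I]
    ring_nf
  have hne : (2 * ↑π * I * (-z)) ≠ 0 := by
    rw [hmain]; exact mul_ne_zero (by exact_mod_cast h2π.ne') hu0
  rw [Complex.cpow_def_of_ne_zero hne, hlog]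
  have h2 : ((2:ℂ) * ↑π) ^ (-s) = Complex.exp (↑(Real.log (2 * π)) * (-s)) := by
    rw [show ((2:ℂ) * ↑π) = ((2 * π : ℝ) : ℂ) by push_cast; ring,
      Complex.cpow_def_of_ne_zero (by exact_mod_cast h2π.ne'), Complex.ofReal_log h2π.le]
  have h3 : z ^ (-s) = Complex.exp (Complex.log z * (-s)) :=
    Complex.cpow_def_of_ne_zero hz0 (-s)
  rw [h2, h3, ← Complex.exp_add, ← Complex.exp_add]
  congr 1
  ring


/-- A bound for norms of negative complex powers. -/
lemma cpow_norm_le {c : ℂ} (hc : c ≠ 0) (s : ℂ) :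
    ‖c ^ (-s)‖ ≤ ‖c‖ ^ (-s.re) * Real.exp (π * |s.im|) := by
  rw [Complex.norm_cpow_of_ne_zero hc]
  have h1 : (-s).re = -s.re := by simp
  have h2 : (-s).im = -s.im := by simp
  rw [h1, h2, div_eq_mul_inv, ← Real.exp_neg]
  apply mul_le_mul_of_nonneg_left _ (Real.rpow_nonneg (norm_nonneg c) _)
  apply Real.exp_le_exp.mpr
  calc -(c.arg * -s.im) = c.arg * s.im := by ring
    _ ≤ |c.arg * s.im| := le_abs_self _
    _ = |c.arg| * |s.im| := abs_mul _ _
    _ ≤ π * |s.im| := mul_le_mul_of_nonneg_right (Complex.abs_arg_le_pi c) (abs_nonneg _)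

/-- `1 + |x| ≤ A * |x - τ|`. -/
lemma abs_lower (hτ : 0 < τ.im) (x : ℝ) :
    1 + |x| ≤ ((1 + ‖τ‖) / τ.im + 1) * ‖(x:ℂ) - τ‖ := by
  have h1 : τ.im ≤ ‖(x:ℂ) - τ‖ := by
    calc τ.im = |((x:ℂ) - τ).im| := by simp [abs_of_pos, hτ, abs_of_neg, neg_pos]
      _ ≤ ‖(x:ℂ) - τ‖ := Complex.abs_im_le_norm _
  have h2 : |x| - ‖τ‖ ≤ ‖(x:ℂ) - τ‖ := by
    have := norm_sub_norm_le (x:ℂ) τ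
    simpa using this
  have h3 : (0:ℝ) < (1 + ‖τ‖) / τ.im := by
    have := norm_nonneg τ; positivity
  have h4 : 1 + ‖τ‖ ≤ (1 + ‖τ‖) / τ.im * ‖(x:ℂ) - τ‖ := by
    rw [div_mul_eq_mul_div, le_div_iff₀ hτ]
    have h5 : 0 ≤ 1 + ‖τ‖ := by have := norm_nonneg τ; linarith
    calc (1 + ‖τ‖) * τ.im ≤ (1 + ‖τ‖) * ‖(x:ℂ) - τ‖ :=
          mul_le_mul_of_nonneg_left h1 h5
      _ = (1 + ‖τ‖) * ‖(x:ℂ) - τ‖ := rfl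
  nlinarith [h2, h4]

lemma gfun_fourier_integrable (hs : 1 < s.re) (hτ : 0 < τ.im) :
    Integrable (𝓕 (gfun s τ)) := by
  set A : ℝ := (1 + ‖τ‖) / τ.im + 1 with hA
  have hApos : 0 < A := by
    have h3 : (0:ℝ) < (1 + ‖τ‖) / τ.im := by
      have := norm_nonneg τ; positivity
    simp only [hA]; linarith
  set C : ℝ := Real.exp (π * |s.im|) * (2 * π / A) ^ (-s.re) * ‖Complex.Gamma s‖ with hC
  have hcont : Continuous (𝓕 (gfun s τ)) := by
    rw [continuous_iff_continuousAt]
    intro x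
    have : ContinuousAt (fun y : ℝ => (2 * ↑π * I * ((y:ℂ) - τ)) ^ (-s) * Complex.Gamma s) x := by
      apply ContinuousAt.mul _ continuousAt_const
      exact ContinuousAt.comp (g := fun z : ℂ => z ^ (-s))
        (f := fun y : ℝ => 2 * ↑π * I * ((y:ℂ) - τ)) (x := x)
        (continuousAt_cpow_const (Complex.mem_slitPlane_iff.mpr (Or.inl (hre hτ))))
        (by fun_prop)
    apply this.congr
    filter_upwards with y
    rw [gfun_fourier hs hτ]
  apply Integrable.mono' ((((integrable_one_add_norm
      (μ := (volume : Measure ℝ)) (r := s.re) (by simpa using hs))).const_mul C))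
    hcont.aestronglyMeasurable
  filter_upwards with x
  rw [gfun_fourier hs hτ]
  have hc0 : (2 * ↑π * I * ((x:ℂ) - τ)) ≠ 0 := by
    intro h
    have := hre (x := x) hτ
    rw [h] at this
    simp at this
  have key := cpow_norm_le hc0 s
  have habs : ‖2 * ↑π * I * ((x:ℂ) - τ)‖ = 2 * π * ‖(x:ℂ) - τ‖ := by
    simp [norm_mul, abs_of_pos Real.pi_pos]
  have hlow : 2 * π / A * (1 + ‖x‖) ≤ ‖2 * ↑π * I * ((x:ℂ) - τ)‖ := by
    rw [habs, div_mul_eq_mul_div, div_le_iff₀ hApos]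
    have h2 := abs_lower hτ x
    have h2π : (0:ℝ) < 2 * π := by positivity
    calc 2 * π * (1 + ‖x‖) = 2 * π * (1 + |x|) := by rw [Real.norm_eq_abs]
      _ ≤ 2 * π * (A * ‖(x:ℂ) - τ‖) := by
          apply mul_le_mul_of_nonneg_left _ h2π.le
          simpa [hA] using h2
      _ = 2 * π * ‖(x:ℂ) - τ‖ * A := by ring
  have hpos : 0 < 2 * π / A * (1 + ‖x‖) := by
    have : (0:ℝ) < 1 + ‖x‖ := by positivity
    positivity
  have hr : ‖2 * ↑π * I * ((x:ℂ) - τ)‖ ^ (-s.re)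
      ≤ (2 * π / A * (1 + ‖x‖)) ^ (-s.re) :=
    Real.rpow_le_rpow_of_nonpos hpos hlow (by linarith)
  rw [norm_mul]
  calc ‖(2 * ↑π * I * ((x:ℂ) - τ)) ^ (-s)‖ * ‖Complex.Gamma s‖
      ≤ (2 * π / A * (1 + ‖x‖)) ^ (-s.re) * Real.exp (π * |s.im|) * ‖Complex.Gamma s‖ := by
        apply mul_le_mul_of_nonneg_right _ (norm_nonneg _)
        refine le_trans key ?_
        exact mul_le_mul_of_nonneg_right hr (Real.exp_pos _).le
    _ = C * (1 + ‖x‖) ^ (-s.re) := by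
        rw [Real.mul_rpow (by positivity) (by positivity), hC]
        ring


lemma gfun_continuous (hs : 1 < s.re) (hτ : 0 < τ.im) : Continuous (gfun s τ) := by
  rw [continuous_iff_continuousAt]
  intro x
  rcases lt_trichotomy x 0 with hx | hx | hx
  · have : ∀ᶠ y in 𝓝 x, gfun s τ y = 0 := by
      filter_upwards [eventually_lt_nhds hx] with y hy
      exact Set.indicator_of_notMem (by simpa using hy.le) _
    exact (continuousAt_const (y := (0:ℂ))).congr (this.mono fun y hy => hy.symm)
  · -- x = 0 : squeeze
    subst hx
    have h0 : gfun s τ 0 = 0 := Set.indicator_of_notMem (by simp) _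
    rw [ContinuousAt, h0]
    refine squeeze_zero_norm (a := fun t : ℝ => |t| ^ (s.re - 1)) ?_ ?_
    · intro t
      by_cases ht : t ∈ Ioi (0:ℝ)
      · rw [gfun, Set.indicator_of_mem ht, aux_norm ht]
        have ht' : (0:ℝ) < t := ht
        simp only [abs_of_pos ht']
        have : Real.exp (-((-(2 * ↑π * I * τ)).re * t)) ≤ 1 := by
          rw [Real.exp_le_one_iff]
          have h1 := hre' hτ
          nlinarith [ht'.le]
        nlinarith [Real.rpow_nonneg ht'.le (s.re - 1), this,
          Real.rpow_nonneg ht'.le (s.re - 1)]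
      · rw [gfun, Set.indicator_of_notMem ht, norm_zero]
        positivity
    · have hcont : ContinuousAt (fun t : ℝ => |t| ^ (s.re - 1)) 0 := by
        exact ContinuousAt.comp (g := fun u : ℝ => u ^ (s.re - 1)) (f := fun t : ℝ => |t|)
          (Real.continuousAt_rpow_const _ _ (Or.inr (by linarith)))
          continuous_abs.continuousAt
      have : |(0:ℝ)| ^ (s.re - 1) = 0 := by
        rw [abs_zero, Real.zero_rpow (by linarith)]
      rw [ContinuousAt, this] at hcont
      exact hcont
  · have hmem : ∀ᶠ y in 𝓝 x, y ∈ Ioi (0:ℝ) := eventually_gt_nhds hx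
    have hca : ContinuousAt (fun t : ℝ =>
        (t : ℂ) ^ (s - 1) * Complex.exp (-(-(2 * π * I * τ) * t))) x := by
      apply ContinuousAt.mul
      · exact ContinuousAt.comp (g := fun z : ℂ => z ^ (s-1)) (f := fun t : ℝ => (t:ℂ))
          (continuousAt_cpow_const (Complex.ofReal_mem_slitPlane.2 hx)) (by fun_prop)
      · fun_prop
    apply hca.congr
    filter_upwards [hmem] with y hy
    exact (Set.indicator_of_mem hy
      (fun t : ℝ => (t : ℂ) ^ (s - 1) * Complex.exp (-(-(2 * π * I * τ) * t)))).symm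

lemma gfun_inversion (hs : 1 < s.re) (hτ : 0 < τ.im) (ξ : ℝ) :
    𝓕 (fun v : ℝ => 𝓕 (gfun s τ) (-v)) ξ = gfun s τ ξ := by
  have h1 : (fun v : ℝ => 𝓕 (gfun s τ) (-v)) = fun v => (𝓕 (gfun s τ)) (-v) := rfl
  rw [h1, ← Real.fourierInv_eq_fourier_comp_neg]
  exact MeasureTheory.Integrable.fourierInv_fourier_eq (gfun_integrable hs hτ)
    (gfun_fourier_integrable hs hτ) ((gfun_continuous hs hτ).continuousAt)


lemma Gamma_ne_zero' (hs : 1 < s.re) : Complex.Gamma s ≠ 0 := by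
  apply Complex.Gamma_ne_zero
  intro m h
  rw [h] at hs
  simp only [Complex.neg_re, Complex.natCast_re] at hs
  have : (0:ℝ) ≤ m := m.cast_nonneg
  linarith

/-- `f x = K ⬝ 𝓕 g (-x)`. -/
lemma fx_eq (hs : 1 < s.re) (hτ : 0 < τ.im) (x : ℝ) :
    (τ + (x:ℂ)) ^ (-s)
      = Complex.exp (-(π:ℂ) * I * s / 2) * (2 * (π:ℂ)) ^ s / Complex.Gamma s
        * 𝓕 (gfun s τ) (-x) := by
  rw [gfun_fourier hs hτ (-x)]
  have h1 : (((-x : ℝ)):ℂ) - τ = -(τ + x) := by push_cast; ring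
  rw [h1, branch (by simpa using hτ) s]
  have h2 : (2 * ↑π : ℂ) ≠ 0 := by
    have : (0:ℝ) < 2 * π := by positivity
    exact_mod_cast this.ne'
  have h3 : (2 * (π:ℂ)) ^ s * (2 * ↑π : ℂ) ^ (-s) = 1 := by
    rw [← Complex.cpow_add _ _ h2]
    simp
  have h4 : Complex.exp (-(π:ℂ) * I * s / 2) * Complex.exp (↑π * I * s / 2) = 1 := by
    rw [← Complex.exp_add]
    ring_nf
    exact Complex.exp_zero
  have h5 := Gamma_ne_zero' hs
  rw [div_mul_eq_mul_div, eq_div_iff h5]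
  linear_combination (-((τ + (x:ℂ)) ^ (-s) * Complex.Gamma s
      * Complex.exp (-(π:ℂ) * I * s / 2) * Complex.exp (↑π * I * s / 2))) * h3
    - ((τ + (x:ℂ)) ^ (-s) * Complex.Gamma s) * h4


/-- The Fourier transform of `x ↦ (τ+x)^(-s)`. -/
lemma fourier_f (hs : 1 < s.re) (hτ : 0 < τ.im) (ξ : ℝ) :
    𝓕 (fun x : ℝ => (τ + (x:ℂ)) ^ (-s)) ξ
      = Complex.exp (-(π:ℂ) * I * s / 2) * (2 * (π:ℂ)) ^ s / Complex.Gamma s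
        * gfun s τ ξ := by
  set K : ℂ := Complex.exp (-(π:ℂ) * I * s / 2) * (2 * (π:ℂ)) ^ s / Complex.Gamma s with hK
  have h1 : (fun x : ℝ => (τ + (x:ℂ)) ^ (-s))
      = fun x : ℝ => K * 𝓕 (gfun s τ) (-x) := funext fun x => fx_eq hs hτ x
  rw [h1]
  have h2 : 𝓕 (fun x : ℝ => K * 𝓕 (gfun s τ) (-x)) ξ
      = K * 𝓕 (fun x : ℝ => 𝓕 (gfun s τ) (-x)) ξ := by
    rw [Real.fourier_real_eq, Real.fourier_real_eq, ← integral_const_mul]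
    congr 1
    funext v
    simp only [Circle.smul_def, smul_eq_mul]
    ring
  rw [h2, gfun_inversion hs hτ ξ]

/-- Continuity of `x ↦ (τ+x)^(-s)`. -/
lemma f_continuous (hτ : 0 < τ.im) :
    Continuous (fun x : ℝ => (τ + (x:ℂ)) ^ (-s)) := by
  rw [continuous_iff_continuousAt]
  intro x
  exact ContinuousAt.comp (g := fun z : ℂ => z ^ (-s)) (f := fun x : ℝ => τ + (x:ℂ)) (x := x)
    (continuousAt_cpow_const (Complex.mem_slitPlane_iff.mpr (Or.inr (by simp [hτ.ne']))))
    (by fun_prop)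

/-- Decay of `x ↦ (τ+x)^(-s)`. -/
lemma f_decay (hs : 1 < s.re) (hτ : 0 < τ.im) :
    (fun x : ℝ => (τ + (x:ℂ)) ^ (-s)) =O[cocompact ℝ] (|·| ^ (-s.re)) := by
  rw [isBigO_iff]
  refine ⟨Real.exp (π * |s.im|) * 2 ^ s.re, ?_⟩
  have hmem : ∀ᶠ x : ℝ in cocompact ℝ, 2 * ‖τ‖ + 1 ≤ |x| := by
    rw [cocompact_eq_atBot_atTop, eventually_sup]
    constructor
    · filter_upwards [eventually_le_atBot (-(2 * ‖τ‖ + 1))] with x hx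
      rw [_root_.abs_of_nonpos (by nlinarith [norm_nonneg τ])]
      linarith
    · filter_upwards [eventually_ge_atTop (2 * ‖τ‖ + 1)] with x hx
      rw [_root_.abs_of_nonneg (by nlinarith [norm_nonneg τ])]
      linarith
  filter_upwards [hmem] with x hx
  have hτa := norm_nonneg τ
  have hxpos : (0:ℝ) < |x| := by linarith
  have hne : τ + (x:ℂ) ≠ 0 := by
    intro h
    have : (τ + (x:ℂ)).im = 0 := by rw [h]; simp
    simp only [Complex.add_im, Complex.ofReal_im, add_zero] at this
    exact hτ.ne' this
  have hlow : |x| / 2 ≤ ‖τ + (x:ℂ)‖ := by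
    have h2 : |x| - ‖τ‖ ≤ ‖(x:ℂ) + τ‖ := by
      have := norm_sub_norm_le (x:ℂ) (-τ)
      simpa [sub_neg_eq_add] using this
    have h3 : ‖(x:ℂ) + τ‖ = ‖τ + (x:ℂ)‖ := by rw [add_comm]
    rw [h3] at h2
    nlinarith
  have key := cpow_norm_le hne s
  have hr : ‖τ + (x:ℂ)‖ ^ (-s.re) ≤ (|x| / 2) ^ (-s.re) :=
    Real.rpow_le_rpow_of_nonpos (by linarith) hlow (by linarith)
  have h6 : (|x| / 2) ^ (-s.re) = 2 ^ s.re * |x| ^ (-s.re) := by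
    rw [Real.div_rpow (abs_nonneg x) (by norm_num : (0:ℝ) ≤ 2),
      Real.rpow_neg (by norm_num : (0:ℝ) ≤ 2)]
    rw [div_eq_mul_inv, inv_inv]
    ring
  have h7 : ‖|x| ^ (-s.re)‖ = |x| ^ (-s.re) := by
    rw [Real.norm_eq_abs, _root_.abs_of_nonneg (Real.rpow_nonneg hxpos.le _)]
  calc ‖(τ + (x:ℂ)) ^ (-s)‖
      ≤ ‖τ + (x:ℂ)‖ ^ (-s.re) * Real.exp (π * |s.im|) := key
    _ ≤ (|x| / 2) ^ (-s.re) * Real.exp (π * |s.im|) :=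
        mul_le_mul_of_nonneg_right hr (Real.exp_pos _).le
    _ = Real.exp (π * |s.im|) * 2 ^ s.re * ‖|x| ^ (-s.re)‖ := by
        rw [h6, h7]; ring

/-- Summability of `gfun` over the integers. -/
lemma gfun_summable (hs : 1 < s.re) (hτ : 0 < τ.im) :
    Summable (fun n : ℤ => gfun s τ (n : ℝ)) := by
  apply Summable.of_nat_of_neg
  · -- positive side
    set r : ℝ := Real.exp (-(-(2 * ↑π * I * τ)).re) with hrdef
    have hr1 : r < 1 := by
      rw [hrdef, Real.exp_lt_one_iff]
      have := hre' (τ := τ) hτ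
      linarith
    have hr0 : 0 < r := Real.exp_pos _
    set k : ℕ := ⌈s.re - 1⌉₊ with hk
    apply Summable.of_norm_bounded (g := fun n : ℕ => (n:ℝ) ^ k * r ^ n)
      (summable_pow_mul_geometric_of_norm_lt_one k (by rwa [Real.norm_eq_abs, abs_of_pos hr0]))
    intro n
    rcases Nat.eq_zero_or_pos n with hn | hn
    · subst hn
      simp [gfun]
    · have hn' : (0:ℝ) < n := by exact_mod_cast hn
      have hmem : ((n:ℝ)) ∈ Ioi (0:ℝ) := hn'
      have hcast : (((n:ℤ)):ℝ) = (n:ℝ) := by push_cast; ring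
      rw [gfun, hcast, Set.indicator_of_mem hmem, aux_norm hn']
      have h1 : (n:ℝ) ^ (s.re - 1) ≤ (n:ℝ) ^ (k:ℝ) := by
        apply Real.rpow_le_rpow_of_exponent_le (by exact_mod_cast hn)
        exact_mod_cast Nat.le_ceil (s.re - 1)
      have h2 : Real.exp (-((-(2 * ↑π * I * τ)).re * n)) = r ^ n := by
        rw [hrdef, ← Real.exp_nat_mul]
        congr 1
        ring
      rw [h2]
      apply mul_le_mul_of_nonneg_right _ (pow_nonneg hr0.le n)
      rw [← Real.rpow_natCast (n:ℝ) k]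
      exact h1
  · -- negative side : all zero
    apply Summable.congr summable_zero
    intro n
    symm
    rw [gfun, Set.indicator_of_notMem]
    intro h
    rw [Set.mem_Ioi] at h
    push_cast at h
    linarith [Nat.cast_nonneg (α := ℝ) n]


end LipAux

open LipAux

/-- Lipschitz's formula: for `Re s > 1` and `τ` in the upper half-plane,
`∑_{n ∈ ℤ} (τ+n)^{-s} = e^{-πis/2}(2π)^s/Γ(s) · ∑_{n ≥ 1} n^{s-1} e^{2πinτ}`. -/
theorem lipschitz_formula (s : ℂ) (hs : 1 < s.re) (τ : ℂ) (hτ : 0 < τ.im) :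
    ∑' n : ℤ, (τ + (n : ℂ)) ^ (-s) =
      Complex.exp (-(Real.pi : ℂ) * Complex.I * s / 2) * (2 * (Real.pi : ℂ)) ^ s /
        Complex.Gamma s *
        ∑' n : ℕ+, (n : ℂ) ^ (s - 1) * Complex.exp (2 * (Real.pi : ℂ) * Complex.I * n * τ) := by
  set K : ℂ := Complex.exp (-(π:ℂ) * I * s / 2) * (2 * (π:ℂ)) ^ s / Complex.Gamma s with hK
  have hsummable : Summable fun n : ℤ => 𝓕 (fun x : ℝ => (τ + (x:ℂ)) ^ (-s)) (n : ℝ) := by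
    apply Summable.congr ((gfun_summable hs hτ).mul_left K)
    intro n
    exact (fourier_f hs hτ (n : ℝ)).symm
  have poisson := Real.tsum_eq_tsum_fourier_of_rpow_decay_of_summable
    (f_continuous hτ) hs (f_decay hs hτ) hsummable 0
  have hLHS : ∑' n : ℤ, (τ + (n : ℂ)) ^ (-s)
      = ∑' n : ℤ, (fun x : ℝ => (τ + (x:ℂ)) ^ (-s)) ((0:ℝ) + (n:ℝ)) := by
    congr 1
    funext n
    push_cast
    norm_num
  rw [hLHS, poisson]
  have hRHS : ∀ n : ℤ, 𝓕 (fun x : ℝ => (τ + (x:ℂ)) ^ (-s)) (n:ℝ)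
        * (fourier n ((0:ℝ) : UnitAddCircle))
      = K * gfun s τ (n : ℝ) := by
    intro n
    have h0 : ((0:ℝ) : UnitAddCircle) = 0 := by norm_num
    rw [h0, fourier_eval_zero, mul_one, fourier_f hs hτ]
  rw [tsum_congr hRHS, tsum_mul_left]
  congr 1
  -- reindex : sum over ℤ of gfun equals sum over ℕ+
  have hinj : Function.Injective (fun m : ℕ+ => ((m : ℕ) : ℤ)) := by
    intro a b h
    simp only [Int.natCast_inj] at h
    exact PNat.coe_injective h
  have hsupp : Function.support (fun n : ℤ => gfun s τ (n : ℝ))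
      ⊆ Set.range (fun m : ℕ+ => ((m : ℕ) : ℤ)) := by
    intro n hn
    have hpos : 0 < n := by
      by_contra hneg
      push_neg at hneg
      apply hn
      have hnot : ((n:ℝ)) ∉ Ioi (0:ℝ) := by
        rw [Set.mem_Ioi]
        push_neg
        exact_mod_cast hneg
      exact Set.indicator_of_notMem hnot _
    refine ⟨⟨n.toNat, by omega⟩, ?_⟩
    simp only [PNat.mk_coe]
    omega
  rw [← Function.Injective.tsum_eq hinj hsupp]
  apply tsum_congr
  intro m
  have hm : (0:ℝ) < ((m:ℕ):ℝ) := by exact_mod_cast m.pos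
  have hcast : ((((m:ℕ):ℤ)):ℝ) = ((m:ℕ):ℝ) := by push_cast; ring
  simp only [gfun]
  rw [hcast, Set.indicator_of_mem (by exact hm)]
  have hc1 : (((m:ℕ):ℝ):ℂ) = ((m:ℕ):ℂ) := by push_cast; ring
  rw [hc1]
  have hc2 : ((m:ℕ):ℂ) = ((m:ℂ)) := by norm_cast
  rw [hc2]
  congr 1
  ring
end

section
/- For every negative odd integer m, the limit lim_{s→m} Γ(s)ζ(s,1/2)cos(πs/2) exists and equals (-1)^{(m+1)/2} · (2^m - 1)π B_{1-m} / (2·(1-m)!), where B_n denotes the n-th Bernoulli number. -/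
open Complex HurwitzZeta Filter Topology

section Bern
open PowerSeries

private lemma exp_sub_one_ne_zero' : PowerSeries.exp ℚ - 1 ≠ 0 := fun h => by
  have := congrArg (PowerSeries.coeff (R := ℚ) 1) h
  simp [PowerSeries.coeff_exp] at this

private lemma bernoulli_poly_eval_one_half (k : ℕ) :
    (Polynomial.bernoulli k).eval (1 / 2 : ℚ) = (2 * (1 / 2 : ℚ) ^ k - 1) * bernoulli k := by
  have hF := Polynomial.bernoulli_generating_function (1 / 2 : ℚ)
  have hBmul := bernoulliPowerSeries_mul_exp_sub_one ℚ
  set E := rescale (1 / 2 : ℚ) (PowerSeries.exp ℚ) with hE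
  set B := bernoulliPowerSeries ℚ with hB
  have hEE : E * E = PowerSeries.exp ℚ := by
    rw [hE, exp_mul_exp_eq_exp_add]
    norm_num [rescale_one]
  have h1 : rescale (1 / 2 : ℚ) B * (E - 1) = PowerSeries.C (R := ℚ) (1 / 2) * X := by
    rw [hE, hB, ← map_one (rescale (1 / 2 : ℚ)), ← map_sub, ← map_mul, hBmul, rescale_X]
  have h2 : PowerSeries.exp ℚ - 1 = (E - 1) * (E + 1) := by linear_combination -hEE
  have hC : (PowerSeries.C (R := ℚ) 2) * PowerSeries.C (R := ℚ) (1 / 2) = 1 := by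
    rw [← map_mul]; norm_num
  have hG : (PowerSeries.C (R := ℚ) 2 * rescale (1 / 2 : ℚ) B - B) * (PowerSeries.exp ℚ - 1)
      = X * E := by
    linear_combination (PowerSeries.C (R := ℚ) 2 * rescale (1 / 2 : ℚ) B) * h2
      + PowerSeries.C (R := ℚ) 2 * (E + 1) * h1 + (X * (E + 1)) * hC - hBmul
  have hFG := mul_right_cancel₀ exp_sub_one_ne_zero' (hF.trans hG.symm)
  have hk := congrArg (PowerSeries.coeff (R := ℚ) k) hFG
  simp [hB, bernoulliPowerSeries, coeff_rescale, Polynomial.eval_smul] at hk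
  have hfac : ((k.factorial : ℚ)) ≠ 0 := Nat.cast_ne_zero.mpr k.factorial_ne_zero
  have h2k : (2:ℚ)^k ≠ 0 := pow_ne_zero _ two_ne_zero
  have hk' : Polynomial.eval (1/2 : ℚ) (Polynomial.bernoulli k) * 2 ^ k
      = (2 - 2 ^ k) * bernoulli k := by
    field_simp at hk
    apply mul_right_cancel₀ hfac
    apply mul_right_cancel₀ hfac
    linear_combination ((k.factorial : ℚ)) ^ 2 * hk
  have hp : (2:ℚ)^k*(1/2)^k = 1 := by rw [← mul_pow]; norm_num
  field_simp
  linear_combination (1/2:ℚ)^k * hk' -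
    (Polynomial.eval (1/2:ℚ) (Polynomial.bernoulli k) + bernoulli k) * hp

end Bern

/-- For a negative odd integer `m`, `lim_{s→m} Γ(s) ζ(s,1/2) cos(πs/2)` exists and equals
`(-1)^{(m+1)/2} (2^m - 1) π B_{1-m} / (2 (1-m)!)`. -/
theorem limit_Gamma_hurwitzZeta_cos_neg_odd (m : ℤ) (hm : m < 0) (hodd : Odd m) :
    Tendsto
      (fun s : ℂ => Complex.Gamma s * hurwitzZeta ((1 / 2 : ℝ) : UnitAddCircle) s *
        Complex.cos ((Real.pi : ℂ) * s / 2))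
      (𝓝[≠] (m : ℂ))
      (𝓝 ((-1 : ℂ) ^ ((m + 1) / 2) * ((2 : ℂ) ^ m - 1) * (Real.pi : ℂ) *
        ((bernoulli (1 - m).toNat : ℚ) : ℂ) / (2 * (Nat.factorial (1 - m).toNat : ℂ)))) := by
  obtain ⟨n, hm'⟩ : ∃ n : ℕ, m = -((n : ℤ) + 1) := ⟨(-m - 1).toNat, by omega⟩
  obtain ⟨l, hl⟩ := hodd
  have hm1 : (m : ℂ) ≠ 1 := by exact_mod_cast (show m ≠ 1 by omega)
  -- the auxiliary function
  set g : ℂ → ℂ := fun s => (Real.pi : ℂ) * hurwitzZeta ((1 / 2 : ℝ) : UnitAddCircle) s /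
    (2 * Complex.sin ((Real.pi : ℂ) * s / 2) * Complex.Gamma (1 - s)) with hg
  -- value of sin at m
  have hsinm : Complex.sin ((Real.pi : ℂ) * (m : ℂ) / 2) = (-1 : ℂ) ^ l := by
    have harg : (Real.pi : ℂ) * (m : ℂ) / 2 = (l : ℂ) * (Real.pi : ℂ) + (Real.pi : ℂ) / 2 := by
      rw [show ((m : ℤ) : ℂ) = 2 * (l : ℂ) + 1 by exact_mod_cast congrArg (Int.cast : ℤ → ℂ) hl]
      ring
    rw [harg, Complex.sin_add_pi_div_two]
    rcases Int.even_or_odd l with ⟨j, hj⟩ | ⟨j, hj⟩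
    · rw [show ((l : ℤ) : ℂ) = ((j : ℤ) : ℂ) * 2 by exact_mod_cast congrArg (Int.cast : ℤ → ℂ) (by omega : l = j * 2)]
      rw [show ((j : ℤ) : ℂ) * 2 * (Real.pi : ℂ) = (j : ℂ) * (2 * Real.pi) by ring,
        Complex.cos_int_mul_two_pi]
      rw [show l = 2 * j by omega, zpow_mul]
      norm_num
    · rw [show ((l : ℤ) : ℂ) = ((j : ℤ) : ℂ) * 2 + 1 by exact_mod_cast congrArg (Int.cast : ℤ → ℂ) (by omega : l = j * 2 + 1)]
      rw [show (((j : ℤ) : ℂ) * 2 + 1) * (Real.pi : ℂ) = (j : ℂ) * (2 * Real.pi) + Real.pi by ring,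
        Complex.cos_int_mul_two_pi_add_pi]
      rw [show l = 2 * j + 1 by omega, zpow_add₀ (by norm_num : (-1 : ℂ) ≠ 0), zpow_mul]
      norm_num
  have hA : ((-1 : ℂ) ^ l) * ((-1 : ℂ) ^ l) = 1 := by
    rw [← zpow_add₀ (by norm_num : (-1 : ℂ) ≠ 0), show l + l = 2 * l by ring, zpow_mul]
    norm_num
  have hAne : ((-1 : ℂ) ^ l) ≠ 0 := by
    intro h; rw [h, mul_zero] at hA; exact one_ne_zero hA.symm
  -- value of Gamma at 1 - m
  have h1m : (1 : ℂ) - (m : ℂ) = ((n + 1 : ℕ) : ℂ) + 1 := by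
    rw [hm']; push_cast; ring
  have hGm : Complex.Gamma (1 - (m : ℂ)) = ((n + 1).factorial : ℂ) := by
    rw [h1m, Complex.Gamma_nat_eq_factorial]
  have hGmne : Complex.Gamma (1 - (m : ℂ)) ≠ 0 := by
    rw [hGm]; exact_mod_cast (n + 1).factorial_ne_zero
  have hden : 2 * Complex.sin ((Real.pi : ℂ) * (m : ℂ) / 2) * Complex.Gamma (1 - (m : ℂ)) ≠ 0 := by
    rw [hsinm]
    exact mul_ne_zero (mul_ne_zero two_ne_zero hAne) hGmne
  -- continuity of g at m
  have hGargs : ∀ j : ℕ, (1 : ℂ) - (m : ℂ) ≠ -j := by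
    intro j h
    rw [h1m] at h
    have h' : ((n + 2 + j : ℕ) : ℂ) = 0 := by push_cast at h ⊢; linear_combination h
    have : (n + 2 + j : ℕ) = 0 := by exact_mod_cast h'
    omega
  have hcont : ContinuousAt g (m : ℂ) := by
    apply ContinuousAt.div
    · exact continuousAt_const.mul (differentiableAt_hurwitzZeta _ hm1).continuousAt
    · apply ContinuousAt.mul
      · exact continuousAt_const.mul (by fun_prop : ContinuousAt (fun s : ℂ => Complex.sin ((Real.pi : ℂ) * s / 2)) (m : ℂ))
      · exact (Complex.differentiableAt_Gamma _ hGargs).continuousAt.comp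
          ((continuous_const.sub continuous_id).continuousAt)
    · exact hden
  have htend : Tendsto g (𝓝[≠] (m : ℂ)) (𝓝 (g (m : ℂ))) :=
    hcont.continuousWithinAt.tendsto
  -- eventual equality
  have heq : g =ᶠ[𝓝[≠] (m : ℂ)] (fun s : ℂ =>
      Complex.Gamma s * hurwitzZeta ((1 / 2 : ℝ) : UnitAddCircle) s *
        Complex.cos ((Real.pi : ℂ) * s / 2)) := by
    have h1 : ∀ᶠ s : ℂ in 𝓝[≠] (m : ℂ), s ∈ Metric.ball ((m : ℤ) : ℂ) 1 :=
      eventually_nhdsWithin_of_eventually_nhds (Metric.ball_mem_nhds _ one_pos)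
    have h2 : ∀ᶠ s : ℂ in 𝓝[≠] (m : ℂ), s ≠ (m : ℂ) := eventually_mem_nhdsWithin
    filter_upwards [h1, h2] with s hs hne
    have hsint : ∀ k : ℤ, s ≠ (k : ℂ) := by
      intro k hk
      have hkm : k ≠ m := fun h => hne (by rw [hk, h])
      have : dist s ((m : ℤ) : ℂ) < 1 := Metric.mem_ball.mp hs
      rw [hk, Complex.dist_eq, show ((k : ℤ) : ℂ) - ((m : ℤ) : ℂ) = ((k - m : ℤ) : ℂ) by push_cast; ring,
        Complex.norm_intCast] at this
      have h1le : (1 : ℝ) ≤ |((k - m : ℤ) : ℝ)| := by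
        exact_mod_cast Int.one_le_abs (sub_ne_zero.mpr hkm)
      linarith
    have hΓ1s : Complex.Gamma (1 - s) ≠ 0 := by
      apply Complex.Gamma_ne_zero
      intro j h
      exact hsint (1 + j) (by push_cast; linear_combination -h)
    have hsin : Complex.sin ((Real.pi : ℂ) * s) ≠ 0 := by
      rw [Complex.sin_ne_zero_iff]
      intro k hk
      exact hsint k (mul_left_cancel₀ (Complex.ofReal_ne_zero.mpr Real.pi_ne_zero)
        (by linear_combination hk))
    have hsh : Complex.sin ((Real.pi : ℂ) * s / 2) ≠ 0 := by
      rw [Complex.sin_ne_zero_iff]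
      intro k hk
      refine hsint (2 * k) ?_
      have := mul_left_cancel₀ (Complex.ofReal_ne_zero.mpr Real.pi_ne_zero)
        (show (Real.pi : ℂ) * s = (Real.pi : ℂ) * (2 * k) by linear_combination 2 * hk)
      push_cast
      linear_combination this
    have key : Complex.Gamma s * Complex.Gamma (1 - s) * Complex.sin ((Real.pi : ℂ) * s)
        = (Real.pi : ℂ) := by
      rw [Complex.Gamma_mul_Gamma_one_sub, div_mul_cancel₀ _ hsin]
    have h2s : Complex.sin ((Real.pi : ℂ) * s) =
        2 * Complex.sin ((Real.pi : ℂ) * s / 2) * Complex.cos ((Real.pi : ℂ) * s / 2) := by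
      have h' := Complex.sin_two_mul ((Real.pi : ℂ) * s / 2)
      rw [show 2 * ((Real.pi : ℂ) * s / 2) = (Real.pi : ℂ) * s by ring] at h'
      exact h'
    show g s = _
    rw [hg]
    simp only
    rw [div_eq_iff (mul_ne_zero (mul_ne_zero two_ne_zero hsh) hΓ1s)]
    linear_combination (-(hurwitzZeta ((1 / 2 : ℝ) : UnitAddCircle) s)) * key +
      hurwitzZeta ((1 / 2 : ℝ) : UnitAddCircle) s * Complex.Gamma s * Complex.Gamma (1 - s) * h2s
  -- value of hurwitzZeta at m
  have hmc : ((m : ℤ) : ℂ) = -(((n + 1 : ℕ)) : ℂ) := by rw [hm']; push_cast; ring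
  have hz := hurwitzZeta_neg_nat (k := n + 1) (x := (1/2 : ℝ)) (by omega) (by norm_num)
  have hhalf : (((1/2 : ℝ)) : ℂ) = algebraMap ℚ ℂ (1/2 : ℚ) := by
    rw [eq_ratCast (algebraMap ℚ ℂ)]; push_cast; norm_num
  have hzval : hurwitzZeta ((1 / 2 : ℝ) : UnitAddCircle) ((m : ℤ) : ℂ)
      = -1 / ((n : ℂ) + 2) * (((2 * (1/2 : ℚ) ^ (n + 2) - 1) * bernoulli (n + 2) : ℚ) : ℂ) := by
    rw [hmc, hz, hhalf, Polynomial.eval_map, Polynomial.eval₂_at_apply,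
      bernoulli_poly_eval_one_half, eq_ratCast (algebraMap ℚ ℂ)]
    push_cast
    ring
  have hval : g ((m : ℤ) : ℂ) = (-1 : ℂ) ^ ((m + 1) / 2) * ((2 : ℂ) ^ m - 1) * (Real.pi : ℂ) *
      ((bernoulli (1 - m).toNat : ℚ) : ℂ) / (2 * (Nat.factorial (1 - m).toNat : ℂ)) := by
    rw [hg]
    simp only
    have hn2 : ((n : ℂ) + 2) ≠ 0 := by
      intro h
      have : ((n + 2 : ℕ) : ℂ) = 0 := by push_cast; linear_combination h
      exact_mod_cast this
    have hfac : (((n + 1).factorial : ℂ)) ≠ 0 := Nat.cast_ne_zero.mpr (n + 1).factorial_ne_zero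
    rw [hzval, hsinm, hGm, show (1 - m).toNat = n + 2 by omega,
      show (m + 1) / 2 = l + 1 by omega,
      show (2 : ℂ) ^ m = 2 * (1 / 2 : ℂ) ^ (n + 2) by
        rw [hm', show -((n : ℤ) + 1) = -(((n + 1 : ℕ) : ℤ)) by push_cast; ring, zpow_neg,
          zpow_natCast, show ((1 : ℂ) / 2) = 2⁻¹ by norm_num, ← inv_pow, pow_succ]
        field_simp
        ring,
      zpow_add_one₀ (by norm_num : (-1 : ℂ) ≠ 0), Nat.factorial_succ (n + 1)]
    push_cast
    have hinv : ((n : ℂ) + 2) * ((n : ℂ) + 2)⁻¹ = 1 := mul_inv_cancel₀ hn2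
    rw [div_eq_div_iff
      (mul_ne_zero (mul_ne_zero two_ne_zero hAne) hfac)
      (mul_ne_zero two_ne_zero (mul_ne_zero (show ((n : ℂ) + 1 + 1) ≠ 0 by
        intro h; exact hn2 (by linear_combination h)) hfac))]
    rw [div_eq_mul_inv, neg_mul, one_mul]
    linear_combination (-(2 : ℂ)) * (Real.pi : ℂ) * (2 * (1 / 2 : ℂ) ^ (n + 2) - 1) *
        ((bernoulli (n + 2) : ℚ) : ℂ) * (((n + 1).factorial : ℕ) : ℂ) * hinv +
      2 * (Real.pi : ℂ) * (2 * (1 / 2 : ℂ) ^ (n + 2) - 1) *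
        ((bernoulli (n + 2) : ℚ) : ℂ) * (((n + 1).factorial : ℕ) : ℂ) * hA
  exact hval ▸ Tendsto.congr' heq htend
end
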